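/- Let A, B : H ⇉ H be maximally monotone operators on a real Hilbert space and α, β > 0. A point x* satisfies 0 ∈ A(x*) + B(x*) if and only if there exists z* ∈ H such that x* = J_{αA}(z*) and x* = J_{βB}((1 + β/α)x* - (β/α)z*), where J denotes the resolvent. -/

import Mathlib

open RealInnerProductSpace

/-- Fixed-point characterization: `0 ∈ A(x*) + B(x*)` iff there is `z*` with
`x* = J_{αA}(z*)` and `x* = J_{βB}((1+β/α)x* - (β/α)z*)`. -/
theorem fixed_point_characterization
    {H : Type*} [NormedAddCommGroup H] [InnerProductSpace ℝ H] [CompleteSpace H]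
    (A B : H → Set H)
    -- A is maximally monotone
    (hAmono : ∀ x y u v, u ∈ A x → v ∈ A y → 0 ≤ ⟪u - v, x - y⟫)
    (hAmax : ∀ x u, (∀ y v, v ∈ A y → 0 ≤ ⟪u - v, x - y⟫) → u ∈ A x)
    -- B is maximally monotone
    (hBmono : ∀ x y u v, u ∈ B x → v ∈ B y → 0 ≤ ⟪u - v, x - y⟫)
    (hBmax : ∀ x u, (∀ y v, v ∈ B y → 0 ≤ ⟪u - v, x - y⟫) → u ∈ B x)
    (α β : ℝ) (hα : 0 < α) (hβ : 0 < β)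
    (JA JB : H → H)
    -- JA is the (single-valued) resolvent of αA, JB that of βB
    (hJA : ∀ z x, JA z = x ↔ α⁻¹ • (z - x) ∈ A x)
    (hJB : ∀ z x, JB z = x ↔ β⁻¹ • (z - x) ∈ B x)
    (xs : H) :
    (∃ a ∈ A xs, ∃ b ∈ B xs, a + b = 0) ↔
      ∃ zs : H, xs = JA zs ∧ xs = JB ((1 + β / α) • xs - (β / α) • zs) := by
  have hα0 : α ≠ 0 := hα.ne'
  have hβ0 : β ≠ 0 := hβ.ne'
  constructor
  · rintro ⟨a, ha, b, hb, hab⟩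
    refine ⟨xs + α • a, ?_, ?_⟩
    · rw [eq_comm, hJA]
      have : α⁻¹ • (xs + α • a - xs) = a := by
        match_scalars
        all_goals field_simp
        ring
      rwa [this]
    · rw [eq_comm, hJB]
      have : β⁻¹ • ((1 + β / α) • xs - (β / α) • (xs + α • a) - xs) = b := by
        have hb' : b = -a := eq_neg_of_add_eq_zero_left (by rw [add_comm]; exact hab)
        rw [hb']
        match_scalars
        all_goals field_simp
        ring
      rwa [this]
  · rintro ⟨zs, h1, h2⟩
    rw [eq_comm, hJA] at h1
    rw [eq_comm, hJB] at h2
    refine ⟨α⁻¹ • (zs - xs), h1, β⁻¹ • ((1 + β / α) • xs - (β / α) • zs - xs), h2, ?_⟩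
    match_scalars
    all_goals (field_simp; try ring)
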